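/- (Brier score improvement from patching.) Let f : 𝒳 → [0,1]^d be a predictor, let E ⊆ 𝒳 be a measurable event with μ(E) > 0, and let φ = E_{(x,y)∼𝒟}[y − f(x) | E]. Define the patched predictor f'(x) = proj_{[0,1]^d}(f(x) + φ·1_E(x)), where proj_{[0,1]^d} is the Euclidean projection onto the cube [0,1]^d. Then B(f, 𝒟) − B(f', 𝒟) ≥ ‖φ‖₂² · μ(E). -/

import Mathlib

open MeasureTheory
open scoped RealInnerProductSpace

/-- The Euclidean projection onto the cube `[0,1]^d` (coordinatewise clamping). -/
noncomputable def projCube {d : ℕ} (v : EuclideanSpace ℝ (Fin d)) :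
    EuclideanSpace ℝ (Fin d) :=
  WithLp.toLp 2 (fun j => min 1 (max 0 (v j)))

lemma cube_norm_le {d : ℕ} {v : EuclideanSpace ℝ (Fin d)}
    (hv : ∀ j, v j ∈ Set.Icc (0:ℝ) 1) : ‖v‖ ≤ Real.sqrt d := by
  rw [EuclideanSpace.norm_eq]
  apply Real.sqrt_le_sqrt
  calc ∑ i, ‖v i‖ ^ 2 ≤ ∑ _i : Fin d, (1:ℝ) := by
        apply Finset.sum_le_sum
        intro i _
        have h := hv i
        have : ‖v i‖ ≤ 1 := by
          rw [Real.norm_eq_abs, abs_le]; constructor <;> [linarith [h.1]; exact h.2]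
        nlinarith [norm_nonneg (v i)]
    _ = d := by simp

lemma projCube_dist_le {d : ℕ} (v y : EuclideanSpace ℝ (Fin d))
    (hy : ∀ j, y j ∈ Set.Icc (0:ℝ) 1) : ‖projCube v - y‖ ≤ ‖v - y‖ := by
  rw [EuclideanSpace.norm_eq, EuclideanSpace.norm_eq]
  apply Real.sqrt_le_sqrt
  apply Finset.sum_le_sum
  intro j _
  have hj := hy j
  have h1 : (projCube v - y) j = min 1 (max 0 (v j)) - y j := rfl
  have h2 : (v - y) j = v j - y j := rfl
  rw [h1, h2, Real.norm_eq_abs, Real.norm_eq_abs, sq_abs, sq_abs]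
  rcases le_total (v j) 0 with h | h
  · rw [max_eq_left h, min_eq_right zero_le_one]
    nlinarith [hj.1, hj.2]
  · rw [max_eq_right h]
    rcases le_total (v j) 1 with h' | h'
    · rw [min_eq_right h']
    · rw [min_eq_left h']
      nlinarith [hj.1, hj.2]

lemma projCube_mem {d : ℕ} (v : EuclideanSpace ℝ (Fin d)) (j : Fin d) :
    projCube v j ∈ Set.Icc (0:ℝ) 1 :=
  ⟨le_min zero_le_one (le_max_left _ _), min_le_left _ _⟩

lemma integrable_of_bound {α : Type*} [MeasurableSpace α] {G : Type*}
    [NormedAddCommGroup G] (μ : Measure α) [IsFiniteMeasure μ] {h : α → G}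
    (hm : AEStronglyMeasurable h μ) (C : ℝ) (hb : ∀ᵐ a ∂μ, ‖h a‖ ≤ C) :
    Integrable h μ :=
  Integrable.mono' (integrable_const C) hm hb


/-- Brier score improvement from patching.  Patching a predictor `f` on
an event `E` of positive mass by the conditional mean residual
`φ = E[y - f(x) | E]` (and projecting back to the cube) decreases the Brier score by at
least `‖φ‖₂² · μ(E)`. -/
theorem brier_improvement_from_patching
    {X : Type*} [MeasurableSpace X] {d : ℕ}
    (𝒟 : Measure (X × EuclideanSpace ℝ (Fin d))) [IsProbabilityMeasure 𝒟]
    (hY : ∀ᵐ p ∂𝒟, ∀ j, p.2 j ∈ Set.Icc (0 : ℝ) 1)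
    (f : X → EuclideanSpace ℝ (Fin d)) (hf_meas : Measurable f)
    (hf_range : ∀ x j, f x j ∈ Set.Icc (0 : ℝ) 1)
    (E : Set X) (hE_meas : MeasurableSet E) (hμE : 0 < (𝒟.map Prod.fst) E)
    (φ : EuclideanSpace ℝ (Fin d))
    (hφ : φ = ((𝒟.map Prod.fst) E).toReal⁻¹ •
      ∫ p in Prod.fst ⁻¹' E, (p.2 - f p.1) ∂𝒟)
    (f' : X → EuclideanSpace ℝ (Fin d))
    (hf' : ∀ x, f' x = projCube (f x + Set.indicator E (fun _ => φ) x)) :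
    (∫ p, ‖f p.1 - p.2‖ ^ 2 ∂𝒟) - (∫ p, ‖f' p.1 - p.2‖ ^ 2 ∂𝒟)
      ≥ ‖φ‖ ^ 2 * ((𝒟.map Prod.fst) E).toReal := by
  set S : Set (X × EuclideanSpace ℝ (Fin d)) := Prod.fst ⁻¹' E with hS_def
  have hS : MeasurableSet S := measurable_fst hE_meas
  have hmap : (𝒟.map Prod.fst) E = 𝒟 S := Measure.map_apply measurable_fst hE_meas
  set μE : ℝ := ((𝒟.map Prod.fst) E).toReal with hμE_def
  have hμE_pos : 0 < μE := by
    apply ENNReal.toReal_pos hμE.ne'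
    rw [hmap]; exact measure_ne_top _ _
  -- measurability basics
  set cc : X → EuclideanSpace ℝ (Fin d) := Set.indicator E (fun _ => φ) with hcc_def
  have hcc_meas : Measurable cc := measurable_const.indicator hE_meas
  have hcc_norm : ∀ x, ‖cc x‖ ≤ ‖φ‖ := by
    intro x
    by_cases hx : x ∈ E
    · simp [hcc_def, hx]
    · simp [hcc_def, hx]
  have hA_meas : Measurable fun p : X × EuclideanSpace ℝ (Fin d) => f p.1 - p.2 :=
    (hf_meas.comp measurable_fst).sub measurable_snd
  have hG_meas : Measurable fun p : X × EuclideanSpace ℝ (Fin d) =>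
      (f p.1 + cc p.1) - p.2 :=
    ((hf_meas.comp measurable_fst).add (hcc_meas.comp measurable_fst)).sub measurable_snd
  have hproj : Measurable (projCube (d := d)) := by
    unfold projCube
    exact (WithLp.measurable_toLp 2 _).comp (measurable_pi_lambda _ fun j =>
      measurable_const.min (measurable_const.max
        ((measurable_pi_apply j).comp (WithLp.measurable_ofLp 2 _))))
  have hf'_meas : Measurable f' := by
    have : Measurable fun x => projCube (f x + cc x) := hproj.comp (hf_meas.add hcc_meas)
    convert this using 1
    funext x; exact hf' x
  -- norm bounds
  set C : ℝ := Real.sqrt d with hC_def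
  have hCnn : 0 ≤ C := Real.sqrt_nonneg _
  have hfC : ∀ x, ‖f x‖ ≤ C := fun x => cube_norm_le (hf_range x)
  have hyC : ∀ᵐ p ∂𝒟, ‖p.2‖ ≤ C := by
    filter_upwards [hY] with p hp
    exact cube_norm_le hp
  -- integrability
  have hAint : Integrable (fun p : X × EuclideanSpace ℝ (Fin d) => ‖f p.1 - p.2‖ ^ 2) 𝒟 := by
    apply integrable_of_bound 𝒟 (hA_meas.norm.pow_const 2).aestronglyMeasurable ((2*C)^2)
    filter_upwards [hyC] with p hp
    have h1 : ‖f p.1 - p.2‖ ≤ 2 * C := by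
      calc ‖f p.1 - p.2‖ ≤ ‖f p.1‖ + ‖p.2‖ := norm_sub_le _ _
        _ ≤ 2 * C := by linarith [hfC p.1]
    rw [Real.norm_eq_abs, abs_of_nonneg (by positivity)]
    exact pow_le_pow_left₀ (norm_nonneg _) h1 2
  have hGint : Integrable (fun p : X × EuclideanSpace ℝ (Fin d) =>
      ‖(f p.1 + cc p.1) - p.2‖ ^ 2) 𝒟 := by
    apply integrable_of_bound 𝒟 (hG_meas.norm.pow_const 2).aestronglyMeasurable ((2*C + ‖φ‖)^2)
    filter_upwards [hyC] with p hp
    have h1 : ‖(f p.1 + cc p.1) - p.2‖ ≤ 2 * C + ‖φ‖ := by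
      calc ‖(f p.1 + cc p.1) - p.2‖ ≤ ‖f p.1 + cc p.1‖ + ‖p.2‖ := norm_sub_le _ _
        _ ≤ (‖f p.1‖ + ‖cc p.1‖) + ‖p.2‖ := by linarith [norm_add_le (f p.1) (cc p.1)]
        _ ≤ 2 * C + ‖φ‖ := by linarith [hfC p.1, hcc_norm p.1]
    rw [Real.norm_eq_abs, abs_of_nonneg (by positivity)]
    exact pow_le_pow_left₀ (norm_nonneg _) h1 2
  -- Step A: the projection inequality, a.e.
  have hstepA : ∀ᵐ p ∂𝒟, ‖f' p.1 - p.2‖ ^ 2 ≤ ‖(f p.1 + cc p.1) - p.2‖ ^ 2 := by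
    filter_upwards [hY] with p hp
    rw [hf' p.1]
    exact pow_le_pow_left₀ (norm_nonneg _) (projCube_dist_le _ _ hp) 2
  have hF'int : Integrable (fun p : X × EuclideanSpace ℝ (Fin d) => ‖f' p.1 - p.2‖ ^ 2) 𝒟 := by
    apply Integrable.mono' hGint
      (((hf'_meas.comp measurable_fst).sub measurable_snd).norm.pow_const 2).aestronglyMeasurable
    filter_upwards [hstepA] with p hp
    rw [Real.norm_eq_abs, abs_of_nonneg (by positivity)]
    exact hp
  have hmono : ∫ p, ‖f' p.1 - p.2‖ ^ 2 ∂𝒟 ≤ ∫ p, ‖(f p.1 + cc p.1) - p.2‖ ^ 2 ∂𝒟 :=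
    integral_mono_ae hF'int hGint hstepA
  -- vector integrability
  have hVint : Integrable (fun p : X × EuclideanSpace ℝ (Fin d) => p.2 - f p.1) 𝒟 := by
    apply integrable_of_bound 𝒟 (measurable_snd.sub (hf_meas.comp measurable_fst)).aestronglyMeasurable (2*C)
    filter_upwards [hyC] with p hp
    calc ‖p.2 - f p.1‖ ≤ ‖p.2‖ + ‖f p.1‖ := norm_sub_le _ _
      _ ≤ 2 * C := by linarith [hfC p.1]
  -- identify the set integral
  have hI : ∫ p in S, (p.2 - f p.1) ∂𝒟 = μE • φ := by
    rw [hφ, smul_smul, mul_inv_cancel₀ hμE_pos.ne', one_smul]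
  -- pointwise identity
  have hpt : ∀ p : X × EuclideanSpace ℝ (Fin d),
      ‖(f p.1 + cc p.1) - p.2‖ ^ 2
        = ‖f p.1 - p.2‖ ^ 2
          + S.indicator (fun q => 2 * ⟪f q.1 - q.2, φ⟫ + ‖φ‖ ^ 2) p := by
    intro p
    by_cases hx : p.1 ∈ E
    · have h1 : cc p.1 = φ := by simp [hcc_def, hx]
      have h2 : p ∈ S := hx
      rw [h1, Set.indicator_of_mem h2]
      have h3 : (f p.1 + φ) - p.2 = (f p.1 - p.2) + φ := by abel
      rw [h3, norm_add_sq_real]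
      ring
    · have h1 : cc p.1 = 0 := by simp [hcc_def, hx]
      have h2 : p ∉ S := hx
      rw [h1, Set.indicator_of_notMem h2, add_zero, add_zero]
  -- integrability of the inner-product term
  have hiip : Integrable (fun q : X × EuclideanSpace ℝ (Fin d) =>
      ⟪f q.1 - q.2, φ⟫) 𝒟 := by
    apply integrable_of_bound 𝒟 (hA_meas.inner measurable_const).aestronglyMeasurable (2*C*‖φ‖)
    filter_upwards [hyC] with p hp
    have h1 : ‖f p.1 - p.2‖ ≤ 2 * C := by
      calc ‖f p.1 - p.2‖ ≤ ‖f p.1‖ + ‖p.2‖ := norm_sub_le _ _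
        _ ≤ 2 * C := by linarith [hfC p.1]
    rw [Real.norm_eq_abs]
    calc |⟪f p.1 - p.2, φ⟫| ≤ ‖f p.1 - p.2‖ * ‖φ‖ := abs_real_inner_le_norm _ _
      _ ≤ 2*C*‖φ‖ := mul_le_mul_of_nonneg_right h1 (norm_nonneg _)
  have hiint : Integrable (fun q : X × EuclideanSpace ℝ (Fin d) =>
      2 * ⟪f q.1 - q.2, φ⟫ + ‖φ‖ ^ 2) 𝒟 := (hiip.const_mul 2).add (integrable_const _)
  -- compute the set integral of inner products
  have hinner : ∫ p in S, ⟪f p.1 - p.2, φ⟫ ∂𝒟 = -(μE * ‖φ‖^2) := by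
    have hcomm : ∀ p : X × EuclideanSpace ℝ (Fin d),
        ⟪f p.1 - p.2, φ⟫ = ⟪φ, f p.1 - p.2⟫ := fun p => real_inner_comm _ _
    simp_rw [hcomm]
    have hWint : Integrable (fun p : X × EuclideanSpace ℝ (Fin d) => f p.1 - p.2)
        (𝒟.restrict S) := by
      apply ((hVint.restrict (s := S)).neg.congr)
      filter_upwards with p
      show -(p.2 - f p.1) = f p.1 - p.2
      abel
    rw [integral_inner hWint]
    have hneg : ∫ p in S, (f p.1 - p.2) ∂𝒟 = -(μE • φ) := by
      rw [← hI, ← integral_neg]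
      apply integral_congr_ae
      filter_upwards with p
      show f p.1 - p.2 = -(p.2 - f p.1)
      abel
    rw [hneg, inner_neg_right, real_inner_smul_right, real_inner_self_eq_norm_sq]
  -- main computation
  have hDS : (𝒟 S).toReal = μE := by rw [hμE_def, hmap]
  have key : ∫ p, ‖(f p.1 + cc p.1) - p.2‖ ^ 2 ∂𝒟
      = (∫ p, ‖f p.1 - p.2‖ ^ 2 ∂𝒟) - ‖φ‖ ^ 2 * μE := by
    simp_rw [hpt]
    rw [integral_add hAint (hiint.indicator hS), integral_indicator hS]
    have hsplit : ∫ p in S, (2 * ⟪f p.1 - p.2, φ⟫ + ‖φ‖ ^ 2) ∂𝒟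
        = 2 * (∫ p in S, ⟪f p.1 - p.2, φ⟫ ∂𝒟) + ‖φ‖^2 * μE := by
      rw [integral_add ((hiip.const_mul 2).restrict) (integrable_const _),
        integral_const_mul, setIntegral_const, smul_eq_mul, Measure.real_def, hDS]
      ring
    rw [hsplit, hinner]
    ring
  linarith [hmono, key.le, key.ge]
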